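/- Converse bound for flat distributions (Proposition 3.3): Let n, m, k be natural numbers, ε ∈ [0,1) a real number, S ⊆ 𝔽₂ⁿ a finite set with |S| = 2^m, and let Enc : 𝔽₂ᵏ → 𝔽₂ⁿ and Dec : 𝔽₂ⁿ → 𝔽₂ᵏ be arbitrary functions. If for every message x ∈ 𝔽₂ᵏ the number of z ∈ S with Dec(Enc(x) + z) = x is at least (1−ε)·2^m, then (1−ε)·2^m·2^k ≤ 2^n. In particular, the rate R = k/n satisfies R ≤ 1 − m/n + log₂(1/(1−ε))/n. -/

import Mathlib

open Classical in
/-- Converse bound for flat distributions (Proposition 3.3). -/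
theorem converse_bound_for_flat_distributions
    (n m k : ℕ) (ε : ℝ) (hε : 0 ≤ ε) (hε1 : ε < 1)
    (S : Finset (Fin n → ZMod 2)) (hS : S.card = 2 ^ m)
    (Enc : (Fin k → ZMod 2) → (Fin n → ZMod 2))
    (Dec : (Fin n → ZMod 2) → (Fin k → ZMod 2))
    (h : ∀ x : Fin k → ZMod 2,
      (1 - ε) * 2 ^ m ≤ ((S.filter (fun z => Dec (Enc x + z) = x)).card : ℝ)) :
    (1 - ε) * 2 ^ m * 2 ^ k ≤ (2 : ℝ) ^ n ∧
    (0 < n → (k : ℝ) / n ≤ 1 - (m : ℝ) / n + Real.logb 2 (1 / (1 - ε)) / n) := by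
  have hmain : (1 - ε) * 2 ^ m * 2 ^ k ≤ (2 : ℝ) ^ n := by
    set T : (Fin k → ZMod 2) → Finset (Fin n → ZMod 2) :=
      fun x => (S.filter (fun z => Dec (Enc x + z) = x)).image (fun z => Enc x + z)
    have hTcard : ∀ x, (T x).card = (S.filter (fun z => Dec (Enc x + z) = x)).card := by
      intro x
      apply Finset.card_image_of_injective
      intro a b hab
      simpa using hab
    have hdisj : ∀ x y, x ≠ y → Disjoint (T x) (T y) := by
      intro x y hxy
      rw [Finset.disjoint_left]
      intro a hax hay
      simp only [T, Finset.mem_image, Finset.mem_filter] at hax hay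
      obtain ⟨z1, ⟨_, hd1⟩, he1⟩ := hax
      obtain ⟨z2, ⟨_, hd2⟩, he2⟩ := hay
      apply hxy
      rw [← hd1, ← hd2, he1, he2]
    have hsum : ∑ x : Fin k → ZMod 2, (T x).card ≤ 2 ^ n := by
      have := Finset.card_biUnion (s := (Finset.univ : Finset (Fin k → ZMod 2)))
        (t := T) (fun x _ y _ hxy => hdisj x y hxy)
      calc ∑ x : Fin k → ZMod 2, (T x).card
          = (Finset.univ.biUnion T).card := this.symm
        _ ≤ (Finset.univ : Finset (Fin n → ZMod 2)).card := Finset.card_le_card (Finset.subset_univ _)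
        _ = 2 ^ n := by rw [Finset.card_univ, Fintype.card_fun, ZMod.card, Fintype.card_fin]
    have hsumR : (1 - ε) * 2 ^ m * 2 ^ k ≤ (∑ x : Fin k → ZMod 2, ((T x).card : ℝ)) := by
      have hcardk : (Finset.univ : Finset (Fin k → ZMod 2)).card = 2 ^ k := by rw [Finset.card_univ, Fintype.card_fun, ZMod.card, Fintype.card_fin]
      calc (1 - ε) * 2 ^ m * 2 ^ k
          = ∑ _x : Fin k → ZMod 2, (1 - ε) * 2 ^ m := by
            rw [Finset.sum_const, hcardk, nsmul_eq_mul]; push_cast; ring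
        _ ≤ ∑ x : Fin k → ZMod 2, ((T x).card : ℝ) := by
            apply Finset.sum_le_sum
            intro x _
            rw [hTcard x]
            exact h x
    calc (1 - ε) * 2 ^ m * 2 ^ k ≤ (∑ x : Fin k → ZMod 2, ((T x).card : ℝ)) := hsumR
      _ = ((∑ x : Fin k → ZMod 2, (T x).card : ℕ) : ℝ) := by push_cast; ring
      _ ≤ ((2 ^ n : ℕ) : ℝ) := by exact_mod_cast hsum
      _ = (2 : ℝ) ^ n := by push_cast; ring
  refine ⟨hmain, fun hn => ?_⟩
  have h1ε : (0 : ℝ) < 1 - ε := by linarith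
  have hpos : (0 : ℝ) < (1 - ε) * 2 ^ m * 2 ^ k := by positivity
  have hlog := Real.logb_le_logb_of_le (b := 2) (by norm_num) hpos hmain
  rw [Real.logb_mul (by positivity) (by positivity),
      Real.logb_mul (by positivity) (by positivity)] at hlog
  have e1 : Real.logb 2 ((2:ℝ) ^ m) = m := by
    rw [Real.logb_pow]; simp
  have e2 : Real.logb 2 ((2:ℝ) ^ k) = k := by
    rw [Real.logb_pow]; simp
  have e3 : Real.logb 2 ((2:ℝ) ^ n) = n := by
    rw [Real.logb_pow]; simp
  rw [e1, e2, e3] at hlog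
  have e4 : Real.logb 2 (1 / (1 - ε)) = - Real.logb 2 (1 - ε) := by
    rw [one_div, Real.logb_inv]
  rw [e4]
  have hnR : (0 : ℝ) < n := by exact_mod_cast hn
  rw [div_le_iff₀ hnR] at *
  have : (1 - (m : ℝ) / n + -Real.logb 2 (1 - ε) / n) * n
      = n - m - Real.logb 2 (1 - ε) := by field_simp; ring
  rw [this]
  linarith
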